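/- arXiv:math/0405587 — 2 statements merged into one kernel-verified Lean document; each statement's English description precedes it below -/
import Mathlib

section
/- Let {ξ_n}_{n≥1} be a strictly increasing sequence with 0 < ξ_n < 1 for all n, and let ν be a Borel probability measure on (0,1] such that ∫ s^n dν(s) = ξ₁²ξ₂²⋯ξ_n² for all n ≥ 1 and such that s ↦ 1/s² is ν-integrable. Set ξ_e := (∫ (1/s) dν(s))^{−1/2}. Let a satisfy √(ξ_e²/2) < a ≤ √((ξ_e² + ξ_e⁴)/2) and a ≤ ξ_e^{−1}(∫ (1/s²) dν(s))^{−1/2}, and set b := √(2a² − ξ_e²). Define weights α(0,0) := a, α(1,0) := ξ_e, α(i,0) := ξ_{i−1} for i ≥ 2, α(0,1) := b, α(0,j) := ξ_{j−1} b / ξ_e for j ≥ 2, α(i,j) := ξ_i for i,j ≥ 1, and β(i,j) := α(j,i). Then: (a) the six-point-test matrix M(k) is positive semidefinite for every k ∈ ℤ₊²; (b) p := ξ_e²ξ₁⁴ + 4a²b²ξ₁² − b²ξ₁⁴ − a²b²ξ_e² − a²b⁴ − 2a²ξ₁⁴ = −2(ξ₁² − a²)²(2a² − ξ_e²) < 0;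 and (c) there is NO Borel probability measure μ on [0,1]² such that ∬ s^{k₁} t^{k₂} dμ(s,t) = γ_k for all k ∈ ℤ₊², where γ_k := α(0,0)²⋯α(k₁−1,0)²·β(k₁,0)²⋯β(k₁,k₂−1)² are the moments of the weight family (α,β). -/
open MeasureTheory

/-- The 2×2 matrix of the Six-point Test at base point `k` for a 2-variable
weighted shift with weight families `α`, `β`. -/
def sixPointMatrix (α β : ℕ × ℕ → ℝ) (k : ℕ × ℕ) : Matrix (Fin 2) (Fin 2) ℝ :=
  !![α (k.1 + 1, k.2) ^ 2 - α k ^ 2,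
     α (k.1, k.2 + 1) * β (k.1 + 1, k.2) - α k * β k;
     α (k.1, k.2 + 1) * β (k.1 + 1, k.2) - α k * β k,
     β (k.1, k.2 + 1) ^ 2 - β k ^ 2]

lemma psd2 (p q r : ℝ) (hp : 0 ≤ p) (hr : 0 ≤ r) (hd : q^2 ≤ p*r) :
    (!![p,q;q,r] : Matrix (Fin 2) (Fin 2) ℝ).PosSemidef := by
  rw [Matrix.posSemidef_iff_dotProduct_mulVec]
  constructor
  · ext i j
    fin_cases i <;> fin_cases j <;>
      simp [Matrix.conjTranspose, Matrix.transpose, Matrix.vecHead, Matrix.vecTail]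
  · intro x
    simp only [Matrix.mulVec, dotProduct, Fin.sum_univ_two, Matrix.of_apply,
      Matrix.cons_val', Matrix.cons_val_zero, Matrix.cons_val_one, Matrix.head_cons,
      Matrix.empty_val', Matrix.cons_val_fin_one, Matrix.head_fin_const, star_trivial]
    rcases eq_or_lt_of_le hp with hp0 | hp0
    · subst hp0
      have hq : q = 0 := by nlinarith [sq_nonneg q]
      subst hq
      have := mul_nonneg hr (sq_nonneg (x 1))
      nlinarith
    · have key : 0 ≤ (p * x 0 + q * x 1)^2 + (p*r - q^2) * (x 1)^2 := by
        nlinarith [sq_nonneg (p * x 0 + q * x 1), mul_nonneg (sub_nonneg.2 hd) (sq_nonneg (x 1))]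
      nlinarith [key, hp0]

set_option maxHeartbeats 4000000 in
/-- The third family (Figure 5) with `√(ξe²/2) < a ≤ √((ξe²+ξe⁴)/2)` and
`b = √(2a²−ξe²)` is jointly hyponormal but not subnormal. -/
theorem stmt17 (ξ : ℕ → ℝ) (ν : Measure ℝ) (hνprob : IsProbabilityMeasure ν)
    (hνsupp : ν (Set.Ioc (0 : ℝ) 1)ᶜ = 0)
    (hξpos : ∀ n : ℕ, 1 ≤ n → 0 < ξ n) (hξlt1 : ∀ n : ℕ, 1 ≤ n → ξ n < 1)
    (hξmono : ∀ n : ℕ, 1 ≤ n → ξ n < ξ (n + 1))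
    (hmom : ∀ n : ℕ, 1 ≤ n → ∫ s, s ^ n ∂ν = ∏ i ∈ Finset.Icc 1 n, ξ i ^ 2)
    (hint : Integrable (fun s => 1 / s ^ 2) ν)
    (ξe : ℝ) (hξe : ξe = Real.sqrt (∫ s, 1 / s ∂ν)⁻¹)
    (a b : ℝ)
    (ha₁ : Real.sqrt (ξe ^ 2 / 2) < a)
    (ha₂ : a ≤ Real.sqrt ((ξe ^ 2 + ξe ^ 4) / 2))
    (ha₃ : a ≤ ξe⁻¹ * Real.sqrt (∫ s, 1 / s ^ 2 ∂ν)⁻¹)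
    (hb : b = Real.sqrt (2 * a ^ 2 - ξe ^ 2))
    (α β : ℕ × ℕ → ℝ)
    (hα : ∀ i j : ℕ, α (i, j) =
      if j = 0 then (if i = 0 then a else if i = 1 then ξe else ξ (i - 1))
      else if i = 0 then (if j = 1 then b else ξ (j - 1) * b / ξe)
      else ξ i)
    (hβ : ∀ k : ℕ × ℕ, β k = α (k.2, k.1))
    (γ : ℕ × ℕ → ℝ)
    (hγ : ∀ k : ℕ × ℕ, γ k =
      (∏ i ∈ Finset.range k.1, α (i, 0) ^ 2) * ∏ j ∈ Finset.range k.2, β (k.1, j) ^ 2) :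
    (∀ k : ℕ × ℕ, (sixPointMatrix α β k).PosSemidef) ∧
    (ξe ^ 2 * ξ 1 ^ 4 + 4 * a ^ 2 * b ^ 2 * ξ 1 ^ 2 - b ^ 2 * ξ 1 ^ 4 -
        a ^ 2 * b ^ 2 * ξe ^ 2 - a ^ 2 * b ^ 4 - 2 * a ^ 2 * ξ 1 ^ 4 =
      -2 * (ξ 1 ^ 2 - a ^ 2) ^ 2 * (2 * a ^ 2 - ξe ^ 2) ∧
     ξe ^ 2 * ξ 1 ^ 4 + 4 * a ^ 2 * b ^ 2 * ξ 1 ^ 2 - b ^ 2 * ξ 1 ^ 4 -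
        a ^ 2 * b ^ 2 * ξe ^ 2 - a ^ 2 * b ^ 4 - 2 * a ^ 2 * ξ 1 ^ 4 < 0) ∧
    ¬ ∃ μ : Measure (ℝ × ℝ), IsProbabilityMeasure μ ∧
        μ (Set.Icc (0 : ℝ) 1 ×ˢ Set.Icc (0 : ℝ) 1)ᶜ = 0 ∧
        ∀ k : ℕ × ℕ, ∫ p, p.1 ^ k.1 * p.2 ^ k.2 ∂μ = γ k := by
  -- ==================== basic analytic facts ====================
  have hae : ∀ᵐ s ∂ν, s ∈ Set.Ioc (0:ℝ) 1 := ae_iff.mpr hνsupp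
  have hint1 : Integrable (fun s => 1 / s) ν := by
    refine hint.mono ?_ ?_
    · exact (measurable_const.div measurable_id).aestronglyMeasurable
    · filter_upwards [hae] with s hs
      obtain ⟨hs0, hs1⟩ := hs
      simp only [Real.norm_eq_abs]
      rw [abs_of_nonneg (by positivity), abs_of_nonneg (by positivity)]
      rw [div_le_div_iff₀ (by positivity) (by positivity)]
      nlinarith
  have hmom1 : ∫ s, s ^ 1 ∂ν = ξ 1 ^ 2 := by
    rw [hmom 1 le_rfl]; simp
  have hξ1 : 0 < ξ 1 := hξpos 1 le_rfl
  have hξ1' : ξ 1 < 1 := hξlt1 1 le_rfl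
  have hintS : Integrable (fun s : ℝ => s ^ 1) ν := by
    by_contra h
    rw [integral_undef h] at hmom1
    nlinarith
  have hI1 : (1:ℝ) ≤ ∫ s, 1 / s ∂ν := by
    have := integral_mono_ae (integrable_const (1:ℝ)) hint1 ?_
    · simpa using this
    · filter_upwards [hae] with s hs
      obtain ⟨hs0, hs1⟩ := hs
      rw [le_div_iff₀ hs0]; linarith
  have hI1' : (1:ℝ) < ∫ s, 1 / s ∂ν := by
    rcases lt_or_eq_of_le hI1 with h | h
    · exact h
    · exfalso
      have hone' : ∫ s, (1:ℝ) ∂ν = 1 := by simp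
      have hz : ∫ s, (1 / s - 1) ∂ν = 0 := by
        rw [integral_sub hint1 (integrable_const 1), hone', ← h]; ring
      have hnn : 0 ≤ᵐ[ν] fun s => 1 / s - 1 := by
        filter_upwards [hae] with s hs
        obtain ⟨hs0, hs1⟩ := hs
        have h1 : (1:ℝ) ≤ 1/s := by rw [le_div_iff₀ hs0]; linarith
        show (0:ℝ) ≤ 1 / s - 1
        linarith
      have hz2 := (integral_eq_zero_iff_of_nonneg_ae hnn (hint1.sub (integrable_const 1))).1 hz
      have hone : ∀ᵐ s ∂ν, s ^ 1 = (1:ℝ) := by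
        filter_upwards [hz2, hae] with s h1 h2
        obtain ⟨hs0, hs1⟩ := h2
        have h3 : 1 / s - 1 = 0 := h1
        have h4 : 1 / s = 1 := by linarith
        field_simp at h4
        simp [h4]
      rw [integral_congr_ae hone, hone'] at hmom1
      nlinarith
  have hJ : 1 / ξ 1 ^ 2 ≤ ∫ s, 1 / s ∂ν := by
    have hintL : Integrable (fun s : ℝ => 2 / ξ 1 ^ 2 - s ^ 1 / (ξ 1 ^ 2 * ξ 1 ^ 2)) ν :=
      (integrable_const _).sub (hintS.div_const _)
    have hmono := integral_mono_ae hintL hint1 ?_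
    · rw [integral_sub (integrable_const _) (hintS.div_const _), integral_div, integral_div,
        hmom1] at hmono
      simp only [integral_const, measure_univ, ENNReal.toReal_one, probReal_univ, one_smul] at hmono
      calc 1 / ξ 1 ^ 2 = 2 / ξ 1 ^ 2 - ξ 1 ^ 2 / (ξ 1 ^ 2 * ξ 1 ^ 2) := by
            field_simp; norm_num
        _ ≤ _ := hmono
    · filter_upwards [hae] with s hs
      obtain ⟨hs0, hs1⟩ := hs
      have key : 0 ≤ (s - ξ 1 ^ 2)^2 / (s * (ξ 1 ^2 * ξ 1 ^ 2)) := by positivity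
      have expand : (s - ξ 1 ^ 2)^2 / (s * (ξ 1 ^2 * ξ 1 ^ 2))
          = 1 / s - (2 / ξ 1 ^ 2 - s ^ 1 / (ξ 1 ^ 2 * ξ 1 ^ 2)) := by
        field_simp
        ring
      rw [expand] at key
      linarith
  -- ==================== scalar facts ====================
  have hIpos : (0:ℝ) < ∫ s, 1 / s ∂ν := by linarith
  have hEeq : ξe ^ 2 = (∫ s, 1 / s ∂ν)⁻¹ := by
    rw [hξe, Real.sq_sqrt (by positivity)]
  have hEpos : 0 < ξe := by
    rw [hξe]
    exact Real.sqrt_pos.mpr (by positivity)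
  have hξe0 : ξe ≠ 0 := ne_of_gt hEpos
  have hE1 : ξe ^ 2 < 1 := by rw [hEeq]; exact inv_lt_one_of_one_lt₀ hI1'
  have hEx : ξe ^ 2 ≤ ξ 1 ^ 2 := by
    rw [hEeq]
    have h1 : (0:ℝ) < 1 / ξ 1 ^ 2 := by positivity
    have := inv_anti₀ h1 hJ
    rwa [one_div, inv_inv] at this
  have ha0 : 0 < a := lt_of_le_of_lt (Real.sqrt_nonneg _) ha₁
  have h2a : ξe ^ 2 < 2 * a ^ 2 := by
    nlinarith [Real.sq_sqrt (show (0:ℝ) ≤ ξe^2/2 by positivity), Real.sqrt_nonneg (ξe^2/2), ha₁]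
  have ha2' : a ^ 2 ≤ (ξe ^ 2 + ξe ^ 4) / 2 := by
    have h := pow_le_pow_left₀ ha0.le ha₂ 2
    rwa [Real.sq_sqrt (by positivity)] at h
  have hb2 : b ^ 2 = 2 * a ^ 2 - ξe ^ 2 := by
    rw [hb, Real.sq_sqrt (by linarith)]
  have hb0 : 0 < b := by
    rw [hb]; exact Real.sqrt_pos.mpr (by linarith)
  have hE0 : (0:ℝ) < ξe ^ 2 := by positivity
  have hB : b ^ 2 ≤ ξe ^ 2 * ξe ^ 2 := by nlinarith [hb2, ha2']
  have hBE : b ^ 2 ≤ ξe ^ 2 := by nlinarith [hB, hE1, hE0]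
  have haE : a ^ 2 ≤ ξe ^ 2 := by nlinarith [ha2', hE1, hEpos]
  have haX : a ^ 2 < ξ 1 ^ 2 := by nlinarith [ha2', hE1, hEpos, hEx]
  refine ⟨?_, ⟨?_, ?_⟩, ?_⟩
  -- ==================== (a) joint hyponormality ====================
  · intro k
    obtain ⟨i, j⟩ := k
    rcases j with _ | j
    · rcases i with _ | _ | i
      · -- k = (0,0)
        have v : sixPointMatrix α β (0,0) =
            !![ξe^2 - a^2, b*b - a*a; b*b - a*a, ξe^2 - a^2] := by
          ext i' j'
          fin_cases i' <;> fin_cases j' <;> simp [sixPointMatrix, hβ, hα]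
        rw [v]
        exact psd2 _ _ _ (by nlinarith) (by nlinarith) (by nlinarith [hb2])
      · -- k = (1,0)
        have v : sixPointMatrix α β (1,0) =
            !![ξ 1^2 - ξe^2, ξ 1 * (ξ 1 * b / ξe) - ξe * b;
               ξ 1 * (ξ 1 * b / ξe) - ξe * b, ξ 1^2 - b^2] := by
          ext i' j'
          fin_cases i' <;> fin_cases j' <;> simp [sixPointMatrix, hβ, hα]
        rw [v]
        refine psd2 _ _ _ (by nlinarith) (by nlinarith) ?_
        have hq : ξ 1 * (ξ 1 * b / ξe) - ξe * b = b * (ξ 1^2 - ξe^2) / ξe := by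
          field_simp
        rw [hq, div_pow, div_le_iff₀ hE0]
        linarith [mul_nonneg (mul_nonneg (sub_nonneg.2 hEx) (sub_nonneg.2 hBE))
          (sq_nonneg (ξ 1))]
      · -- k = (i+2,0)
        have hv0 : 0 < ξ (i+1) := hξpos (i+1) (by omega)
        have hu0 : 0 < ξ (i+2) := hξpos (i+2) (by omega)
        have hvu : ξ (i+1) < ξ (i+2) := hξmono (i+1) (by omega)
        have hu1 : ξ (i+2) < 1 := hξlt1 (i+2) (by omega)
        have hv1 : ξ (i+1) < 1 := hξlt1 (i+1) (by omega)
        have v : sixPointMatrix α β (i+2,0) =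
            !![ξ (i+2)^2 - ξ (i+1)^2,
               ξ (i+2) * (ξ (i+2) * b / ξe) - ξ (i+1) * (ξ (i+1) * b / ξe);
               ξ (i+2) * (ξ (i+2) * b / ξe) - ξ (i+1) * (ξ (i+1) * b / ξe),
               ξ 1^2 - (ξ (i+1) * b / ξe)^2] := by
          ext i' j'
          fin_cases i' <;> fin_cases j' <;> simp [sixPointMatrix, hβ, hα]
        rw [v]
        have hr : 0 ≤ ξ 1^2 - (ξ (i+1) * b / ξe)^2 := by
          rw [sub_nonneg, div_pow, div_le_iff₀ hE0]
          linarith [mul_nonneg (sub_nonneg.2 hB) (sq_nonneg (ξ (i+1))),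
            mul_nonneg (show (0:ℝ) ≤ 1 - ξ (i+1)^2 by nlinarith [hv0, hv1])
              (mul_pos hE0 hE0).le,
            mul_nonneg (sub_nonneg.2 hEx) hE0.le]
        refine psd2 _ _ _ (by nlinarith [hv0, hvu]) hr ?_
        have hq : ξ (i+2) * (ξ (i+2) * b / ξe) - ξ (i+1) * (ξ (i+1) * b / ξe)
            = b * (ξ (i+2)^2 - ξ (i+1)^2) / ξe := by field_simp
        have hr' : ξ 1^2 - (ξ (i+1) * b / ξe)^2
            = (ξ 1^2 * ξe^2 - ξ (i+1)^2 * b^2) / ξe^2 := by field_simp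
        rw [hq, hr', div_pow, ← mul_div_assoc, div_le_div_iff₀ hE0 hE0]
        have key : b^2 * (ξ (i+2)^2 - ξ (i+1)^2)^2
            ≤ (ξ (i+2)^2 - ξ (i+1)^2) * (ξ 1^2 * ξe^2 - ξ (i+1)^2 * b^2) := by
          have h1 : b^2 * ξ (i+2)^2 ≤ ξ 1^2 * ξe^2 := by
            linarith [mul_nonneg (sub_nonneg.2 hB) (sq_nonneg (ξ (i+2))),
              mul_nonneg (show (0:ℝ) ≤ 1 - ξ (i+2)^2 by nlinarith [hu0, hu1])
                (mul_pos hE0 hE0).le,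
              mul_nonneg (sub_nonneg.2 hEx) hE0.le]
          linarith [mul_nonneg
            (sub_nonneg.2 (show ξ (i+1)^2 ≤ ξ (i+2)^2 by nlinarith [hv0, hvu]))
            (sub_nonneg.2 h1)]
        linarith [mul_le_mul_of_nonneg_right key hE0.le]
    · rcases i with _ | i
      · rcases j with _ | j
        · -- k = (0,1)
          have v : sixPointMatrix α β (0,1) =
              !![ξ 1^2 - b^2, (ξ 1 * b / ξe) * ξ 1 - b * ξe;
                 (ξ 1 * b / ξe) * ξ 1 - b * ξe, ξ 1^2 - ξe^2] := by
            ext i' j'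
            fin_cases i' <;> fin_cases j' <;> simp [sixPointMatrix, hβ, hα]
          rw [v]
          refine psd2 _ _ _ (by nlinarith) (by nlinarith) ?_
          have hq : (ξ 1 * b / ξe) * ξ 1 - b * ξe = b * (ξ 1^2 - ξe^2) / ξe := by
            field_simp
          rw [hq, div_pow, div_le_iff₀ hE0]
          linarith [mul_nonneg (mul_nonneg (sub_nonneg.2 hEx) (sub_nonneg.2 hBE))
            (sq_nonneg (ξ 1))]
        · -- k = (0,j+2)
          have hv0 : 0 < ξ (j+1) := hξpos (j+1) (by omega)
          have hu0 : 0 < ξ (j+2) := hξpos (j+2) (by omega)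
          have hvu : ξ (j+1) < ξ (j+2) := hξmono (j+1) (by omega)
          have hu1 : ξ (j+2) < 1 := hξlt1 (j+2) (by omega)
          have hv1 : ξ (j+1) < 1 := hξlt1 (j+1) (by omega)
          have v : sixPointMatrix α β (0,j+2) =
              !![ξ 1^2 - (ξ (j+1) * b / ξe)^2,
                 (ξ (j+2) * b / ξe) * ξ (j+2) - (ξ (j+1) * b / ξe) * ξ (j+1);
                 (ξ (j+2) * b / ξe) * ξ (j+2) - (ξ (j+1) * b / ξe) * ξ (j+1),
                 ξ (j+2)^2 - ξ (j+1)^2] := by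
            ext i' j'
            fin_cases i' <;> fin_cases j' <;> simp [sixPointMatrix, hβ, hα]
          rw [v]
          have hp : 0 ≤ ξ 1^2 - (ξ (j+1) * b / ξe)^2 := by
            rw [sub_nonneg, div_pow, div_le_iff₀ hE0]
            linarith [mul_nonneg (sub_nonneg.2 hB) (sq_nonneg (ξ (j+1))),
              mul_nonneg (show (0:ℝ) ≤ 1 - ξ (j+1)^2 by nlinarith [hv0, hv1])
                (mul_pos hE0 hE0).le,
              mul_nonneg (sub_nonneg.2 hEx) hE0.le]
          refine psd2 _ _ _ hp (by nlinarith [hv0, hvu]) ?_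
          have hq : (ξ (j+2) * b / ξe) * ξ (j+2) - (ξ (j+1) * b / ξe) * ξ (j+1)
              = b * (ξ (j+2)^2 - ξ (j+1)^2) / ξe := by field_simp
          have hp' : ξ 1^2 - (ξ (j+1) * b / ξe)^2
              = (ξ 1^2 * ξe^2 - ξ (j+1)^2 * b^2) / ξe^2 := by field_simp
          rw [hq, hp', div_pow, div_mul_eq_mul_div, div_le_div_iff₀ hE0 hE0]
          have key : b^2 * (ξ (j+2)^2 - ξ (j+1)^2)^2
              ≤ (ξ 1^2 * ξe^2 - ξ (j+1)^2 * b^2) * (ξ (j+2)^2 - ξ (j+1)^2) := by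
            have h1 : b^2 * ξ (j+2)^2 ≤ ξ 1^2 * ξe^2 := by
              linarith [mul_nonneg (sub_nonneg.2 hB) (sq_nonneg (ξ (j+2))),
                mul_nonneg (show (0:ℝ) ≤ 1 - ξ (j+2)^2 by nlinarith [hu0, hu1])
                  (mul_pos hE0 hE0).le,
                mul_nonneg (sub_nonneg.2 hEx) hE0.le]
            linarith [mul_nonneg
              (sub_nonneg.2 (show ξ (j+1)^2 ≤ ξ (j+2)^2 by nlinarith [hv0, hvu]))
              (sub_nonneg.2 h1)]
          linarith [mul_le_mul_of_nonneg_right key hE0.le]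
      · -- k = (i+1,j+1)
        have hi0 : 0 < ξ (i+1) := hξpos (i+1) (by omega)
        have hj0 : 0 < ξ (j+1) := hξpos (j+1) (by omega)
        have hi : ξ (i+1) < ξ (i+2) := hξmono (i+1) (by omega)
        have hj : ξ (j+1) < ξ (j+2) := hξmono (j+1) (by omega)
        have v : sixPointMatrix α β (i+1,j+1) =
            !![ξ (i+2)^2 - ξ (i+1)^2,
               ξ (i+1) * ξ (j+1) - ξ (i+1) * ξ (j+1);
               ξ (i+1) * ξ (j+1) - ξ (i+1) * ξ (j+1),
               ξ (j+2)^2 - ξ (j+1)^2] := by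
          ext i' j'
          fin_cases i' <;> fin_cases j' <;> simp [sixPointMatrix, hβ, hα]
        rw [v]
        have hp : 0 ≤ ξ (i+2)^2 - ξ (i+1)^2 := by nlinarith [hi0, hi]
        have hr : 0 ≤ ξ (j+2)^2 - ξ (j+1)^2 := by nlinarith [hj0, hj]
        refine psd2 _ _ _ hp hr ?_
        have hq0 : ξ (i+1) * ξ (j+1) - ξ (i+1) * ξ (j+1) = 0 := by ring
        rw [hq0]
        simpa using mul_nonneg hp hr
  -- ==================== (b) the identity ====================
  · linear_combination (4*a^2*ξ 1^2 - ξ 1^4 - a^2*ξe^2 - a^2*(b^2 + (2*a^2 - ξe^2))) * hb2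
  -- ==================== (b) p < 0 ====================
  · have hid : ξe ^ 2 * ξ 1 ^ 4 + 4 * a ^ 2 * b ^ 2 * ξ 1 ^ 2 - b ^ 2 * ξ 1 ^ 4 -
        a ^ 2 * b ^ 2 * ξe ^ 2 - a ^ 2 * b ^ 4 - 2 * a ^ 2 * ξ 1 ^ 4 =
        -2 * (ξ 1 ^ 2 - a ^ 2) ^ 2 * (2 * a ^ 2 - ξe ^ 2) := by
      linear_combination (4*a^2*ξ 1^2 - ξ 1^4 - a^2*ξe^2 - a^2*(b^2 + (2*a^2 - ξe^2))) * hb2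
    rw [hid]
    nlinarith [mul_pos (mul_pos (show (0:ℝ) < (ξ 1 ^ 2 - a ^ 2) ^ 2 by nlinarith [haX])
      (show (0:ℝ) < 2 * a ^ 2 - ξe ^ 2 by linarith)) one_pos]
  -- ==================== (c) not subnormal ====================
  · rintro ⟨μ, hμp, hμs, hμm⟩
    -- γ values
    have g00 : γ (0,0) = 1 := by simp [hγ]
    have g10 : γ (1,0) = a^2 := by
      simp [hγ, hβ, hα, Finset.prod_range_succ]
    have g01 : γ (0,1) = a^2 := by
      simp [hγ, hβ, hα, Finset.prod_range_succ]
    have g20 : γ (2,0) = a^2 * ξe^2 := by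
      simp [hγ, hβ, hα, Finset.prod_range_succ]
      all_goals (try field_simp); try ring
    have g02 : γ (0,2) = a^2 * ξe^2 := by
      simp [hγ, hβ, hα, Finset.prod_range_succ]
      all_goals (try field_simp); try ring
    have g11 : γ (1,1) = a^2 * b^2 := by
      simp [hγ, hβ, hα, Finset.prod_range_succ]
      all_goals (try field_simp); try ring
    have g21 : γ (2,1) = a^2 * b^2 * ξ 1^2 := by
      simp [hγ, hβ, hα, Finset.prod_range_succ]
      all_goals (try field_simp); try ring
    have g12 : γ (1,2) = a^2 * b^2 * ξ 1^2 := by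
      simp [hγ, hβ, hα, Finset.prod_range_succ]
      all_goals (try field_simp); try ring
    have g22 : γ (2,2) = a^2 * b^2 * ξ 1^4 := by
      simp [hγ, hβ, hα, Finset.prod_range_succ]
      all_goals (try field_simp); try ring
    have g31 : γ (3,1) = a^2 * b^2 * ξ 1^2 * ξ 2^2 := by
      simp [hγ, hβ, hα, Finset.prod_range_succ]
      all_goals (try field_simp); try ring
    have g13 : γ (1,3) = a^2 * b^2 * ξ 1^2 * ξ 2^2 := by
      simp [hγ, hβ, hα, Finset.prod_range_succ]
      all_goals (try field_simp); try ring
    have hξ2 : 0 < ξ 2 := hξpos 2 (by omega)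
    have hξ12 : ξ 1 < ξ 2 := hξmono 1 le_rfl
    -- integrability of the needed monomials
    have intmono : ∀ k : ℕ × ℕ, 0 < γ k → Integrable (fun p : ℝ × ℝ => p.1^k.1 * p.2^k.2) μ := by
      intro k hk
      by_contra h
      rw [← hμm k, integral_undef h] at hk
      exact lt_irrefl _ hk
    have i00 : Integrable (fun p : ℝ × ℝ => p.1^0 * p.2^0) μ :=
      intmono (0,0) (by rw [g00]; norm_num)
    have i10 : Integrable (fun p : ℝ × ℝ => p.1^1 * p.2^0) μ :=
      intmono (1,0) (by rw [g10]; positivity)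
    have i01 : Integrable (fun p : ℝ × ℝ => p.1^0 * p.2^1) μ :=
      intmono (0,1) (by rw [g01]; positivity)
    have i20 : Integrable (fun p : ℝ × ℝ => p.1^2 * p.2^0) μ :=
      intmono (2,0) (by rw [g20]; positivity)
    have i02 : Integrable (fun p : ℝ × ℝ => p.1^0 * p.2^2) μ :=
      intmono (0,2) (by rw [g02]; positivity)
    have i11 : Integrable (fun p : ℝ × ℝ => p.1^1 * p.2^1) μ :=
      intmono (1,1) (by rw [g11]; positivity)
    have i21 : Integrable (fun p : ℝ × ℝ => p.1^2 * p.2^1) μ :=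
      intmono (2,1) (by rw [g21]; positivity)
    have i12 : Integrable (fun p : ℝ × ℝ => p.1^1 * p.2^2) μ :=
      intmono (1,2) (by rw [g12]; positivity)
    have i22 : Integrable (fun p : ℝ × ℝ => p.1^2 * p.2^2) μ :=
      intmono (2,2) (by rw [g22]; positivity)
    have i31 : Integrable (fun p : ℝ × ℝ => p.1^3 * p.2^1) μ :=
      intmono (3,1) (by rw [g31]; positivity)
    have i13 : Integrable (fun p : ℝ × ℝ => p.1^1 * p.2^3) μ :=
      intmono (1,3) (by rw [g13]; positivity)
    -- named moment equalities
    have I00 : ∫ p : ℝ × ℝ, p.1^0 * p.2^0 ∂μ = γ (0,0) := hμm (0,0)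
    have I10 : ∫ p : ℝ × ℝ, p.1^1 * p.2^0 ∂μ = γ (1,0) := hμm (1,0)
    have I01 : ∫ p : ℝ × ℝ, p.1^0 * p.2^1 ∂μ = γ (0,1) := hμm (0,1)
    have I20 : ∫ p : ℝ × ℝ, p.1^2 * p.2^0 ∂μ = γ (2,0) := hμm (2,0)
    have I02 : ∫ p : ℝ × ℝ, p.1^0 * p.2^2 ∂μ = γ (0,2) := hμm (0,2)
    have I11 : ∫ p : ℝ × ℝ, p.1^1 * p.2^1 ∂μ = γ (1,1) := hμm (1,1)
    have I21 : ∫ p : ℝ × ℝ, p.1^2 * p.2^1 ∂μ = γ (2,1) := hμm (2,1)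
    have I12 : ∫ p : ℝ × ℝ, p.1^1 * p.2^2 ∂μ = γ (1,2) := hμm (1,2)
    have I22 : ∫ p : ℝ × ℝ, p.1^2 * p.2^2 ∂μ = γ (2,2) := hμm (2,2)
    have I31 : ∫ p : ℝ × ℝ, p.1^3 * p.2^1 ∂μ = γ (3,1) := hμm (3,1)
    have I13 : ∫ p : ℝ × ℝ, p.1^1 * p.2^3 ∂μ = γ (1,3) := hμm (1,3)
    -- the quadratic f = (s + t - 2a²)²
    have hfun : (fun p : ℝ × ℝ => (p.1 + p.2 - 2*a^2)^2)
        = fun p : ℝ × ℝ => p.1^2 * p.2^0 + p.1^0 * p.2^2 + 2 * (p.1^1 * p.2^1)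
          + (-(4*a^2)) * (p.1^1 * p.2^0) + (-(4*a^2)) * (p.1^0 * p.2^1)
          + (4*a^2*a^2) * (p.1^0 * p.2^0) := by
      funext p; ring
    have s1 : Integrable (fun p : ℝ × ℝ => p.1^2 * p.2^0 + p.1^0 * p.2^2) μ := i20.add i02
    have s2 : Integrable (fun p : ℝ × ℝ => p.1^2 * p.2^0 + p.1^0 * p.2^2
        + 2 * (p.1^1 * p.2^1)) μ := s1.add (i11.const_mul 2)
    have s3 : Integrable (fun p : ℝ × ℝ => p.1^2 * p.2^0 + p.1^0 * p.2^2
        + 2 * (p.1^1 * p.2^1) + (-(4*a^2)) * (p.1^1 * p.2^0)) μ :=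
      s2.add (i10.const_mul (-(4*a^2)))
    have s4 : Integrable (fun p : ℝ × ℝ => p.1^2 * p.2^0 + p.1^0 * p.2^2
        + 2 * (p.1^1 * p.2^1) + (-(4*a^2)) * (p.1^1 * p.2^0)
        + (-(4*a^2)) * (p.1^0 * p.2^1)) μ := s3.add (i01.const_mul (-(4*a^2)))
    have s5 : Integrable (fun p : ℝ × ℝ => p.1^2 * p.2^0 + p.1^0 * p.2^2
        + 2 * (p.1^1 * p.2^1) + (-(4*a^2)) * (p.1^1 * p.2^0)
        + (-(4*a^2)) * (p.1^0 * p.2^1) + (4*a^2*a^2) * (p.1^0 * p.2^0)) μ :=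
      s4.add (i00.const_mul (4*a^2*a^2))
    have intQ : Integrable (fun p : ℝ × ℝ => (p.1 + p.2 - 2*a^2)^2) μ := by
      rw [hfun]; exact s5
    have exp1 : ∫ p : ℝ × ℝ, (p.1 + p.2 - 2*a^2)^2 ∂μ = 0 := by
      rw [hfun, integral_add s4 (i00.const_mul _), integral_add s3 (i01.const_mul _),
        integral_add s2 (i10.const_mul _), integral_add s1 (i11.const_mul _),
        integral_add i20 i02, integral_const_mul, integral_const_mul, integral_const_mul,
        integral_const_mul, I20, I02, I11, I10, I01, I00, g20, g02, g11, g10, g01, g00]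
      linear_combination (2*a^2) * hb2
    have haeQ : (fun p : ℝ × ℝ => (p.1 + p.2 - 2*a^2)^2) =ᵐ[μ] 0 :=
      (integral_eq_zero_iff_of_nonneg (fun p => sq_nonneg _) intQ).1 exp1
    -- second moment combination
    have hfun2 : (fun p : ℝ × ℝ => p.1 * p.2 * (p.1 + p.2 - 2*a^2)^2)
        = fun p : ℝ × ℝ => p.1^3 * p.2^1 + p.1^1 * p.2^3 + 2 * (p.1^2 * p.2^2)
          + (-(4*a^2)) * (p.1^2 * p.2^1) + (-(4*a^2)) * (p.1^1 * p.2^2)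
          + (4*a^2*a^2) * (p.1^1 * p.2^1) := by
      funext p; ring
    have t1 : Integrable (fun p : ℝ × ℝ => p.1^3 * p.2^1 + p.1^1 * p.2^3) μ := i31.add i13
    have t2 : Integrable (fun p : ℝ × ℝ => p.1^3 * p.2^1 + p.1^1 * p.2^3
        + 2 * (p.1^2 * p.2^2)) μ := t1.add (i22.const_mul 2)
    have t3 : Integrable (fun p : ℝ × ℝ => p.1^3 * p.2^1 + p.1^1 * p.2^3
        + 2 * (p.1^2 * p.2^2) + (-(4*a^2)) * (p.1^2 * p.2^1)) μ :=
      t2.add (i21.const_mul (-(4*a^2)))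
    have t4 : Integrable (fun p : ℝ × ℝ => p.1^3 * p.2^1 + p.1^1 * p.2^3
        + 2 * (p.1^2 * p.2^2) + (-(4*a^2)) * (p.1^2 * p.2^1)
        + (-(4*a^2)) * (p.1^1 * p.2^2)) μ := t3.add (i12.const_mul (-(4*a^2)))
    have exp2 : ∫ p : ℝ × ℝ, p.1 * p.2 * (p.1 + p.2 - 2*a^2)^2 ∂μ
        = γ (3,1) + γ (1,3) + 2 * γ (2,2) + (-(4*a^2)) * γ (2,1) + (-(4*a^2)) * γ (1,2)
          + (4*a^2*a^2) * γ (1,1) := by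
      rw [hfun2, integral_add t4 (i11.const_mul _), integral_add t3 (i12.const_mul _),
        integral_add t2 (i21.const_mul _), integral_add t1 (i22.const_mul _),
        integral_add i31 i13, integral_const_mul, integral_const_mul, integral_const_mul,
        integral_const_mul, I31, I13, I22, I21, I12, I11]
    have key2 : ∫ p : ℝ × ℝ, p.1 * p.2 * (p.1 + p.2 - 2*a^2)^2 ∂μ = 0 := by
      have hz : (fun p : ℝ × ℝ => p.1 * p.2 * (p.1 + p.2 - 2*a^2)^2) =ᵐ[μ] 0 := by
        filter_upwards [haeQ] with p hp
        have hp' : (p.1 + p.2 - 2*a^2)^2 = 0 := hp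
        show p.1 * p.2 * (p.1 + p.2 - 2*a^2)^2 = 0
        rw [hp']; ring
      rw [integral_congr_ae hz]; simp
    rw [key2] at exp2
    rw [g31, g13, g22, g21, g12, g11] at exp2
    -- 0 = 2a²b²( ξ1²(ξ2²-ξ1²) + 2(ξ1²-a²)² ) > 0
    have hQpos : 0 < ξ 1^2 * (ξ 2^2 - ξ 1^2) + 2*(ξ 1^2 - a^2)^2 := by
      have h1 : 0 < ξ 2^2 - ξ 1^2 := by
        have h2 := mul_pos (sub_pos.2 hξ12) (show 0 < ξ 2 + ξ 1 by linarith)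
        linarith only [h2]
      linarith only [mul_pos (mul_pos hξ1 hξ1) h1, sq_nonneg (ξ 1^2 - a^2)]
    have hfin : (0:ℝ) = 2*(a^2*b^2) * (ξ 1^2 * (ξ 2^2 - ξ 1^2) + 2*(ξ 1^2 - a^2)^2) := by
      linear_combination exp2
    have hABpos : 0 < a^2*b^2 := mul_pos (pow_pos ha0 2) (pow_pos hb0 2)
    linarith only [hfin, mul_pos hABpos hQpos]
end

section
/- Let ν be a Borel probability measure on [0,1] with γ_n := ∫ s^n dν(s) > 0 for all n ≥ 0, and let 0 < y ≤ 1. Define weights α(n,0) := √(γ_{n+1}/γ_n) for n ≥ 0, α(n,j) := 1 for n ≥ 0 and j ≥ 1; β(0,0) := y, β(n,0) := y/√(γ_n) for n ≥ 1, β(n,j) := 1 for n ≥ 0 and j ≥ 1. If the six-point-test matrix M(k) is positive semidefinite for every k ∈ ℤ₊², then y² ≤ ν({1}) and there exists a Borel probability measure μ on [0,1]² such that ∬ s^i dμ(s,t) = γ_i for all i ≥ 0 and ∬ s^i t^j dμ(s,t) = y² for all i ≥ 0 and j ≥ 1. -/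
open MeasureTheory

/-- For the 2-variable weighted shift of Figure 6, joint hyponormality implies
`y² ≤ ν({1})` and subnormality (existence of an interpolating Berger measure). -/
theorem stmt19 (ν : Measure ℝ) (hνprob : IsProbabilityMeasure ν)
    (hνsupp : ν (Set.Icc (0 : ℝ) 1)ᶜ = 0)
    (γ : ℕ → ℝ) (hγ : ∀ n : ℕ, γ n = ∫ s, s ^ n ∂ν) (hγpos : ∀ n : ℕ, 0 < γ n)
    (y : ℝ) (hy₀ : 0 < y) (hy₁ : y ≤ 1)
    (α β : ℕ × ℕ → ℝ)
    (hα : ∀ n j : ℕ, α (n, j) = if j = 0 then Real.sqrt (γ (n + 1) / γ n) else 1)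
    (hβ : ∀ n j : ℕ, β (n, j) = if j = 0 then y / Real.sqrt (γ n) else 1)
    (hhyp : ∀ k : ℕ × ℕ, (sixPointMatrix α β k).PosSemidef) :
    ENNReal.ofReal (y ^ 2) ≤ ν {1} ∧
    ∃ μ : Measure (ℝ × ℝ), IsProbabilityMeasure μ ∧
      μ (Set.Icc (0 : ℝ) 1 ×ˢ Set.Icc (0 : ℝ) 1)ᶜ = 0 ∧
      (∀ i : ℕ, ∫ p, p.1 ^ i ∂μ = γ i) ∧
      (∀ i j : ℕ, 1 ≤ j → ∫ p, p.1 ^ i * p.2 ^ j ∂μ = y ^ 2) := by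
  -- a.e. membership in [0,1]
  have hae : ∀ᵐ s ∂ν, s ∈ Set.Icc (0 : ℝ) 1 := MeasureTheory.ae_iff.2 hνsupp
  -- Step 1: y^2 ≤ γ n for all n (from the (1,1) diagonal entry of M(n,0))
  have hysq : ∀ n : ℕ, y ^ 2 ≤ γ n := by
    intro n
    have h := (hhyp (n, 0)).dotProduct_mulVec_nonneg ![0, 1]
    have hM : (0 : ℝ) ≤ β (n, 1) ^ 2 - β (n, 0) ^ 2 := by
      simpa [sixPointMatrix, Matrix.mulVec, dotProduct, Fin.sum_univ_two] using h
    have hγn := hγpos n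
    have hsq : (y / Real.sqrt (γ n)) ^ 2 = y ^ 2 / γ n := by
      rw [div_pow, Real.sq_sqrt hγn.le]
    have hb1 : β (n, 1) = 1 := by rw [hβ]; norm_num
    have hb0 : β (n, 0) = y / Real.sqrt (γ n) := by rw [hβ]; norm_num
    rw [hb1, hb0, one_pow, hsq] at hM
    have hle1 : y ^ 2 / γ n ≤ 1 := by linarith
    exact (div_le_one hγn).1 hle1
  -- Step 2: γ n → (ν {1}).toReal
  have hmeas1 : MeasurableSet ({1} : Set ℝ) := measurableSet_singleton 1
  have htend : Filter.Tendsto γ Filter.atTop (nhds ((ν {1}).toReal)) := by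
    have hdc := MeasureTheory.tendsto_integral_of_dominated_convergence
      (μ := ν) (F := fun n s => s ^ n)
      (f := Set.indicator {1} (fun _ => (1 : ℝ))) (fun _ => 1)
      (fun n => (measurable_id.pow_const n).aestronglyMeasurable)
      (integrable_const 1)
      (by
        intro n
        filter_upwards [hae] with s hs
        rw [Real.norm_eq_abs, abs_pow, abs_of_nonneg hs.1]
        exact pow_le_one₀ hs.1 hs.2)
      (by
        filter_upwards [hae] with s hs
        rcases eq_or_lt_of_le hs.2 with h1 | h1
        · subst h1
          simp [Set.indicator_of_mem]
        · have hs1 : s ∉ ({1} : Set ℝ) := by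
            simp only [Set.mem_singleton_iff]
            exact ne_of_lt h1
          rw [Set.indicator_of_notMem hs1]
          simpa using tendsto_pow_atTop_nhds_zero_of_lt_one hs.1 h1)
    rw [integral_indicator_const (1 : ℝ) hmeas1, smul_eq_mul, mul_one] at hdc
    have hγfun : γ = fun n => ∫ s, s ^ n ∂ν := funext hγ
    rw [hγfun]
    exact hdc
  have hν1R : y ^ 2 ≤ (ν {1}).toReal := ge_of_tendsto' htend hysq
  have hν1 : ENNReal.ofReal (y ^ 2) ≤ ν {1} := ENNReal.ofReal_le_of_le_toReal hν1R
  refine ⟨hν1, ?_⟩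
  -- Step 3: construct the measure
  set c : ENNReal := ENNReal.ofReal (y ^ 2) with hcdef
  have hcne : c ≠ ⊤ := ENNReal.ofReal_ne_top
  have hcy : c.toReal = y ^ 2 := ENNReal.toReal_ofReal (sq_nonneg y)
  have hle : c • Measure.dirac (1 : ℝ) ≤ ν := by
    rw [Measure.le_iff]
    intro s hs
    rw [Measure.smul_apply, Measure.dirac_apply' 1 hs, smul_eq_mul]
    by_cases h1 : (1 : ℝ) ∈ s
    · rw [Set.indicator_of_mem h1, Pi.one_apply, mul_one]
      exact hν1.trans (measure_mono (Set.singleton_subset_iff.2 h1))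
    · rw [Set.indicator_of_notMem h1, mul_zero]
      exact zero_le
  haveI : IsFiniteMeasure (c • Measure.dirac (1 : ℝ)) := by
    constructor
    rw [Measure.smul_apply, smul_eq_mul]
    exact ENNReal.mul_lt_top hcne.lt_top (measure_lt_top _ _)
  set μ₀ : Measure ℝ := ν - c • Measure.dirac 1 with hμ₀
  have hsum : μ₀ + c • Measure.dirac 1 = ν := Measure.sub_add_cancel_of_le hle
  haveI hμ₀fin : IsFiniteMeasure μ₀ := isFiniteMeasure_of_le ν Measure.sub_le
  have hμ₀supp : μ₀ (Set.Icc (0 : ℝ) 1)ᶜ = 0 := by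
    have := Measure.sub_le (μ := ν) (ν := c • Measure.dirac 1) (Set.Icc (0 : ℝ) 1)ᶜ
    rw [hνsupp] at this
    exact le_antisymm this zero_le
  have hae₀ : ∀ᵐ s ∂μ₀, s ∈ Set.Icc (0 : ℝ) 1 := MeasureTheory.ae_iff.2 hμ₀supp
  -- integrability of powers wrt μ₀
  have hint₀ : ∀ i : ℕ, Integrable (fun s : ℝ => s ^ i) μ₀ := by
    intro i
    refine (integrable_const (1 : ℝ)).mono'
      (measurable_id.pow_const i).aestronglyMeasurable ?_
    filter_upwards [hae₀] with s hs
    rw [Real.norm_eq_abs, abs_pow, abs_of_nonneg hs.1]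
    exact pow_le_one₀ hs.1 hs.2
  have hintd : ∀ g : ℝ → ℝ, Integrable g (c • Measure.dirac (1 : ℝ)) := by
    intro g
    exact ((integrable_const (g 1)).congr (ae_eq_dirac g).symm).smul_measure hcne
  -- integral over μ₀ of powers
  have hint₀val : ∀ i : ℕ, ∫ s, s ^ i ∂μ₀ = γ i - y ^ 2 := by
    intro i
    have h1 : ∫ s, s ^ i ∂ν = ∫ s, s ^ i ∂μ₀ + ∫ s, s ^ i ∂(c • Measure.dirac 1) := by
      conv_lhs => rw [← hsum]
      exact integral_add_measure (hint₀ i) (hintd _)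
    rw [integral_smul_measure, integral_dirac, hcy, one_pow, smul_eq_mul, mul_one] at h1
    rw [← hγ i] at h1
    linarith
  -- the measure μ
  set f : ℝ → ℝ × ℝ := fun s => (s, 0) with hfdef
  have hf : Measurable f := measurable_id.prodMk measurable_const
  set μM : Measure (ℝ × ℝ) := μ₀.map f + c • Measure.dirac ((1 : ℝ), (1 : ℝ)) with hμM
  -- main integral computation
  have hmain : ∀ g : ℝ × ℝ → ℝ, Measurable g → Integrable (fun s => g (s, 0)) μ₀ →
      ∫ p, g p ∂μM = (∫ s, g (s, 0) ∂μ₀) + y ^ 2 * g (1, 1) := by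
    intro g hg hgi
    have hInt1 : Integrable g (μ₀.map f) :=
      (integrable_map_measure hg.aestronglyMeasurable hf.aemeasurable).2 hgi
    have hInt2 : Integrable g (c • Measure.dirac ((1 : ℝ), (1 : ℝ))) :=
      ((integrable_const (g (1, 1))).congr (ae_eq_dirac g).symm).smul_measure hcne
    rw [hμM, integral_add_measure hInt1 hInt2,
      integral_map hf.aemeasurable hg.aestronglyMeasurable,
      integral_smul_measure, integral_dirac, hcy, smul_eq_mul]
  refine ⟨μM, ?_, ?_, ?_, ?_⟩
  · -- probability measure
    constructor
    have h0 : μ₀ Set.univ + c = 1 := by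
      have h := congrArg (fun m : Measure ℝ => m Set.univ) hsum
      simp only [Measure.add_apply, Measure.smul_apply, smul_eq_mul,
        measure_univ, mul_one] at h
      exact h
    have hd : (Measure.dirac ((1 : ℝ), (1 : ℝ))) Set.univ = 1 := measure_univ
    rw [hμM, Measure.add_apply, Measure.map_apply hf MeasurableSet.univ,
      Set.preimage_univ, Measure.smul_apply, hd, smul_eq_mul, mul_one]
    exact h0
  · -- support
    have hQ : MeasurableSet (Set.Icc (0 : ℝ) 1 ×ˢ Set.Icc (0 : ℝ) 1) :=
      measurableSet_Icc.prod measurableSet_Icc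
    rw [hμM, Measure.add_apply]
    have h1 : (μ₀.map f) (Set.Icc (0 : ℝ) 1 ×ˢ Set.Icc (0 : ℝ) 1)ᶜ = 0 := by
      rw [Measure.map_apply hf hQ.compl]
      refine measure_mono_null ?_ hμ₀supp
      intro s hs
      simp only [Set.mem_preimage, Set.mem_compl_iff, Set.mem_prod, Set.mem_Icc] at hs ⊢
      intro hmem
      exact hs ⟨hmem, ⟨le_refl 0, zero_le_one⟩⟩
    have h2 : (c • Measure.dirac ((1 : ℝ), (1 : ℝ)))
        (Set.Icc (0 : ℝ) 1 ×ˢ Set.Icc (0 : ℝ) 1)ᶜ = 0 := by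
      rw [Measure.smul_apply, Measure.dirac_apply' _ hQ.compl]
      have hmem : ((1 : ℝ), (1 : ℝ)) ∈ Set.Icc (0 : ℝ) 1 ×ˢ Set.Icc (0 : ℝ) 1 := by
        simp [Set.mem_prod]
      rw [Set.indicator_of_notMem (by simpa using hmem), smul_eq_mul, mul_zero]
    rw [h1, h2, add_zero]
  · -- first moments
    intro i
    have hg : Measurable (fun p : ℝ × ℝ => p.1 ^ i) := (measurable_fst.pow_const i)
    have := hmain (fun p => p.1 ^ i) hg (by simpa using hint₀ i)
    simp only [one_pow, mul_one] at this
    rw [this, hint₀val i]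
    ring
  · -- mixed moments
    intro i j hj
    have hg : Measurable (fun p : ℝ × ℝ => p.1 ^ i * p.2 ^ j) :=
      (measurable_fst.pow_const i).mul (measurable_snd.pow_const j)
    have hzero : ∀ s : ℝ, s ^ i * (0 : ℝ) ^ j = 0 := by
      intro s
      rw [zero_pow (Nat.one_le_iff_ne_zero.1 hj), mul_zero]
    have := hmain (fun p => p.1 ^ i * p.2 ^ j) hg (by
      simp only [hzero]
      exact integrable_const 0 |>.congr (by simp))
    simp only [hzero, one_pow, mul_one, integral_zero] at this
    rw [this, zero_add]
end
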